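/- Let T(x) = Σ_{n=0}^∞ 2^{−n}‖2^n x‖ be the Takagi function, where ‖t‖ = dist(t, ℤ). If x is a dyadic rational, then the right derivative of T at x is +∞ and the left derivative of T at x is −∞. -/

import Mathlib

open Filter

noncomputable def takagi (x : ℝ) : ℝ :=
  ∑' n : ℕ, (2 : ℝ)⁻¹ ^ n * |(2 : ℝ) ^ n * x - round ((2 : ℝ) ^ n * x)|

namespace TakagiAux

noncomputable def g (t : ℝ) : ℝ := |t - round t|

lemma g_nonneg (t : ℝ) : 0 ≤ g t := abs_nonneg _

lemma g_le_half (t : ℝ) : g t ≤ 1/2 := abs_sub_round t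

lemma g_intCast (k : ℤ) : g ((k : ℝ)) = 0 := by
  unfold g
  rw [round_intCast]
  simp

lemma g_int_add (k : ℤ) (t : ℝ) : g ((k : ℝ) + t) = g t := by
  simp only [g, round_intCast_add]
  push_cast
  ring_nf

lemma g_neg (t : ℝ) : g (-t) = g t := by
  rcases eq_or_ne (Int.fract t) 0 with h | h
  · obtain ⟨k, rfl⟩ : ∃ k : ℤ, t = (k : ℝ) := ⟨⌊t⌋, by
      have := Int.fract_add_floor t; rw [h] at this; linarith⟩
    rw [show -((k:ℝ)) = ((-k : ℤ) : ℝ) by push_cast; ring, g_intCast, g_intCast]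
  · rw [g, g, abs_sub_round_eq_min, abs_sub_round_eq_min, Int.fract_neg h]
    rw [min_comm]
    ring_nf

lemma g_lip (s t : ℝ) : g t ≤ g s + |t - s| := by
  calc g t ≤ |t - (round s : ℝ)| := round_le t (round s)
    _ ≤ |t - s| + |s - (round s : ℝ)| := by
        have : t - (round s : ℝ) = (t - s) + (s - round s) := by ring
        rw [this]; exact abs_add_le _ _
    _ = g s + |t - s| := by rw [g]; ring

lemma g_eq_self {t : ℝ} (h0 : 0 ≤ t) (h : t ≤ 1/2) : g t = t := by
  rw [g, abs_sub_round_eq_min, Int.fract_eq_self.2 ⟨h0, by linarith⟩]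
  exact min_eq_left (by linarith)

lemma summable_takagi (x : ℝ) :
    Summable (fun n : ℕ => (2:ℝ)⁻¹ ^ n * g ((2:ℝ)^n * x)) := by
  apply Summable.of_nonneg_of_le
    (fun n => mul_nonneg (by positivity) (g_nonneg _)) (fun n => ?_)
    (summable_geometric_of_lt_one (by norm_num : (0:ℝ) ≤ 2⁻¹) (by norm_num))
  calc (2:ℝ)⁻¹ ^ n * g ((2:ℝ)^n * x) ≤ (2:ℝ)⁻¹ ^ n * 1 := by
        apply mul_le_mul_of_nonneg_left _ (by positivity)
        linarith [g_le_half ((2:ℝ)^n * x)]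
    _ = (2:ℝ)⁻¹ ^ n := mul_one _

lemma takagi_eq (x : ℝ) : takagi x = ∑' n : ℕ, (2:ℝ)⁻¹ ^ n * g ((2:ℝ)^n * x) := rfl

lemma dyadic_int (k : ℤ) (m n : ℕ) (hmn : m ≤ n) :
    (2:ℝ)^n * ((k : ℝ) / 2^m) = ((k * 2^(n - m) : ℤ) : ℝ) := by
  have h2 : (2:ℝ)^n = 2^m * 2^(n-m) := by rw [← pow_add]; congr 1; omega
  push_cast
  rw [h2]
  field_simp

lemma g_dyadic_zero (k : ℤ) (m n : ℕ) (hmn : m ≤ n) :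
    g ((2:ℝ)^n * ((k : ℝ) / 2^m)) = 0 := by
  rw [dyadic_int k m n hmn, g_intCast]

lemma takagi_dyadic (k : ℤ) (m : ℕ) :
    takagi ((k : ℝ) / 2^m) = ∑ n ∈ Finset.range m, (2:ℝ)⁻¹ ^ n * g ((2:ℝ)^n * ((k : ℝ) / 2^m)) := by
  rw [takagi_eq]
  apply tsum_eq_sum
  intro n hn
  rw [g_dyadic_zero k m n (by simpa using hn), mul_zero]

lemma key (k : ℤ) (m N : ℕ) (hmN : m ≤ N) (h : ℝ) (hN : |h| ≤ (2:ℝ)⁻¹ ^ N) :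
    ((N:ℝ) - m) * |h| - m * |h| ≤ takagi ((k:ℝ)/2^m + h) - takagi ((k:ℝ)/2^m) := by
  set x : ℝ := (k:ℝ)/2^m with hxdef
  have habs : 0 ≤ |h| := abs_nonneg h
  have hTy : ∑ n ∈ Finset.range N, (2:ℝ)⁻¹ ^ n * g ((2:ℝ)^n * (x + h)) ≤ takagi (x + h) := by
    rw [takagi_eq]
    exact Summable.sum_le_tsum _ (fun n _ => mul_nonneg (by positivity) (g_nonneg _))
      (summable_takagi (x + h))
  have hsplit : ∑ n ∈ Finset.range N, (2:ℝ)⁻¹ ^ n * g ((2:ℝ)^n * (x + h))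
      = ∑ n ∈ Finset.range m, (2:ℝ)⁻¹ ^ n * g ((2:ℝ)^n * (x + h))
        + ∑ n ∈ Finset.Ico m N, (2:ℝ)⁻¹ ^ n * g ((2:ℝ)^n * (x + h)) := by
    simp only [Finset.range_eq_Ico]
    exact (Finset.sum_Ico_consecutive _ (Nat.zero_le m) hmN).symm
  have hA : ∀ n ∈ Finset.range m,
      (2:ℝ)⁻¹ ^ n * g ((2:ℝ)^n * x) - |h| ≤ (2:ℝ)⁻¹ ^ n * g ((2:ℝ)^n * (x + h)) := by
    intro n _
    have hl := g_lip ((2:ℝ)^n * (x + h)) ((2:ℝ)^n * x)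
    have habs2 : |(2:ℝ)^n * x - (2:ℝ)^n * (x + h)| = (2:ℝ)^n * |h| := by
      rw [show (2:ℝ)^n * x - (2:ℝ)^n * (x + h) = (2:ℝ)^n * (-h) by ring, abs_mul, abs_neg,
        abs_of_pos (show (0:ℝ) < 2^n by positivity)]
    rw [habs2] at hl
    have h2n : (2:ℝ)⁻¹ ^ n * ((2:ℝ)^n * |h|) = |h| := by
      rw [← mul_assoc, ← mul_pow]
      norm_num
    nlinarith [pow_nonneg (show (0:ℝ) ≤ 2⁻¹ by norm_num) n,
      mul_le_mul_of_nonneg_left hl (pow_nonneg (show (0:ℝ) ≤ 2⁻¹ by norm_num) n)]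
  have hB : ∀ n ∈ Finset.Ico m N,
      (2:ℝ)⁻¹ ^ n * g ((2:ℝ)^n * (x + h)) = |h| := by
    intro n hn
    obtain ⟨hmn, hnN⟩ := Finset.mem_Ico.1 hn
    have hsplit2 : (2:ℝ)^n * (x + h) = ((k * 2^(n - m) : ℤ) : ℝ) + (2:ℝ)^n * h := by
      rw [mul_add, hxdef, dyadic_int k m n hmn]
    rw [hsplit2, g_int_add]
    have hgabs : g ((2:ℝ)^n * h) = g ((2:ℝ)^n * |h|) := by
      rcases abs_cases h with ⟨hh, _⟩ | ⟨hh, _⟩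
      · rw [hh]
      · rw [hh, mul_neg, g_neg]
    have hsmall : (2:ℝ)^n * |h| ≤ 1/2 := by
      have h1 : (2:ℝ)^n * |h| ≤ (2:ℝ)^n * (2:ℝ)⁻¹ ^ N :=
        mul_le_mul_of_nonneg_left hN (by positivity)
      have heq : (2:ℝ)^n * (2:ℝ)⁻¹ ^ N = 2^n / 2^N := by
        rw [inv_pow, div_eq_mul_inv]
      have hkey2 : (2:ℝ)^(n+1) ≤ 2^N := pow_le_pow_right₀ (by norm_num) hnN
      have h2 : (2:ℝ)^n * (2:ℝ)⁻¹ ^ N ≤ 1/2 := by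
        rw [heq, div_le_iff₀ (by positivity)]
        have : (2:ℝ)^(n+1) = 2 * 2^n := by ring
        nlinarith [pow_pos (show (0:ℝ) < 2 by norm_num) n]
      linarith
    rw [hgabs, g_eq_self (by positivity) hsmall, ← mul_assoc, ← mul_pow]
    norm_num
  have hBsum : ∑ n ∈ Finset.Ico m N, (2:ℝ)⁻¹ ^ n * g ((2:ℝ)^n * (x + h))
      = ((N:ℝ) - m) * |h| := by
    rw [Finset.sum_congr rfl hB, Finset.sum_const, Nat.card_Ico, nsmul_eq_mul]
    push_cast [Nat.cast_sub hmN]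
    ring
  have hAsum : ∑ n ∈ Finset.range m, (2:ℝ)⁻¹ ^ n * g ((2:ℝ)^n * x) - (m:ℝ) * |h|
      ≤ ∑ n ∈ Finset.range m, (2:ℝ)⁻¹ ^ n * g ((2:ℝ)^n * (x + h)) := by
    have := Finset.sum_le_sum hA
    rw [Finset.sum_sub_distrib, Finset.sum_const, Finset.card_range, nsmul_eq_mul] at this
    linarith
  have hTx := takagi_dyadic k m
  rw [← hxdef] at hTx
  linarith [hTy, hsplit, hBsum, hAsum, hTx]

end TakagiAux

/-- If `x` is a dyadic rational, then the right derivative of the Takagi function at `x`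
is `+∞` and the left derivative is `−∞`. -/
theorem stmt_19 (x : ℝ) (hx : ∃ (k : ℤ) (m : ℕ), x = (k : ℝ) / 2 ^ m) :
    Tendsto (fun y => (takagi y - takagi x) / (y - x)) (nhdsWithin x (Set.Ioi x)) atTop ∧
    Tendsto (fun y => (takagi y - takagi x) / (y - x)) (nhdsWithin x (Set.Iio x)) atBot := by
  obtain ⟨k, m, rfl⟩ := hx
  constructor
  · rw [tendsto_atTop]
    intro C
    obtain ⟨N0, hN0⟩ := exists_nat_ge C
    set N := N0 + 2*m with hNdef
    have hmem : Set.Ioo ((k:ℝ)/2^m) ((k:ℝ)/2^m + (2:ℝ)⁻¹ ^ N) ∈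
        nhdsWithin ((k:ℝ)/2^m) (Set.Ioi ((k:ℝ)/2^m)) :=
      Ioo_mem_nhdsGT_of_mem ⟨le_refl _, lt_add_of_pos_right _ (by positivity)⟩
    filter_upwards [hmem] with y hy
    obtain ⟨hy1, hy2⟩ := hy
    set h := y - (k:ℝ)/2^m with hhdef
    have h0 : 0 < h := by rw [hhdef]; linarith
    have habs : |h| = h := abs_of_pos h0
    have hNb : |h| ≤ (2:ℝ)⁻¹ ^ N := by rw [habs, hhdef]; linarith
    have hkey := TakagiAux.key k m N (by omega) h hNb
    have hy' : (k:ℝ)/2^m + h = y := by rw [hhdef]; ring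
    rw [hy', habs] at hkey
    rw [le_div_iff₀ (by rw [hhdef] at h0 ⊢; linarith)]
    have hNc : ((N:ℝ) - m) - m = N0 := by rw [hNdef]; push_cast; ring
    nlinarith [hN0, h0]
  · rw [tendsto_atBot]
    intro C
    obtain ⟨N0, hN0⟩ := exists_nat_ge (-C)
    set N := N0 + 2*m with hNdef
    have hmem : Set.Ioo ((k:ℝ)/2^m - (2:ℝ)⁻¹ ^ N) ((k:ℝ)/2^m) ∈
        nhdsWithin ((k:ℝ)/2^m) (Set.Iio ((k:ℝ)/2^m)) :=
      Ioo_mem_nhdsLT_of_mem ⟨sub_lt_self _ (by positivity), le_refl _⟩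
    filter_upwards [hmem] with y hy
    obtain ⟨hy1, hy2⟩ := hy
    set h := y - (k:ℝ)/2^m with hhdef
    have h0 : h < 0 := by rw [hhdef]; linarith
    have habs : |h| = -h := abs_of_neg h0
    have hNb : |h| ≤ (2:ℝ)⁻¹ ^ N := by rw [habs, hhdef]; linarith
    have hkey := TakagiAux.key k m N (by omega) h hNb
    have hy' : (k:ℝ)/2^m + h = y := by rw [hhdef]; ring
    rw [hy', habs] at hkey
    rw [div_le_iff_of_neg (by rw [hhdef] at h0 ⊢; linarith)]
    have hNc : ((N:ℝ) - m) - m = N0 := by rw [hNdef]; push_cast; ring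
    nlinarith [hN0, h0]
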